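/- Let P ⊆ ℝ² be a polytope (the convex hull of a nonempty finite set of points) such that every point of P has nonnegative second coordinate, or every point of P has nonpositive second coordinate. Let A₂·P denote the image of P under the matrix A₂ = [[1,1],[0,1]]. Then the number of extreme points of conv(P ∪ A₂·P) is at most the number of extreme points of P plus 2. -/

import Mathlib

open Matrix Set

noncomputable section

/-- `XSeq S a k` is the set of all vectors `T_{k-1} ⋯ T_0 · a` with each `T_j ∈ S`
(and `XSeq S a 0 = {a}`). -/
def XSeq {n : ℕ} (S : Set (Matrix (Fin n) (Fin n) ℝ)) (a : Fin n → ℝ) : ℕ → Set (Fin n → ℝ)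
  | 0 => {a}
  | k + 1 => ⋃ A ∈ S, A.mulVec '' XSeq S a k

/-- `PHull S a k` is the convex hull of `XSeq S a k`. -/
def PHull {n : ℕ} (S : Set (Matrix (Fin n) (Fin n) ℝ)) (a : Fin n → ℝ) (k : ℕ) :
    Set (Fin n → ℝ) :=
  convexHull ℝ (XSeq S a k)

/-- `EPts S a k` is the set of extreme points of `PHull S a k`. -/
def EPts {n : ℕ} (S : Set (Matrix (Fin n) (Fin n) ℝ)) (a : Fin n → ℝ) (k : ℕ) :
    Set (Fin n → ℝ) :=
  Set.extremePoints ℝ (PHull S a k)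

/-- `NExt S a k` is the number of extreme points of `PHull S a k`. -/
def NExt {n : ℕ} (S : Set (Matrix (Fin n) (Fin n) ℝ)) (a : Fin n → ℝ) (k : ℕ) : ℕ :=
  (EPts S a k).ncard

def M1 : Matrix (Fin 2) (Fin 2) ℝ := !![0, 1; 1, 0]
def M2 : Matrix (Fin 2) (Fin 2) ℝ := !![1, 1; 0, 1]
def M3 : Matrix (Fin 2) (Fin 2) ℝ := !![1, 0; 1, 1]
def M4 : Matrix (Fin 2) (Fin 2) ℝ := !![1, 1; 1, 0]
def M5 : Matrix (Fin 2) (Fin 2) ℝ := !![0, 1; 1, 1]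

lemma m2_0 (x : Fin 2 → ℝ) : M2.mulVec x 0 = x 0 + x 1 := by
  simp [M2, Matrix.mulVec, dotProduct, Fin.sum_univ_two]

lemma m2_1 (x : Fin 2 → ℝ) : M2.mulVec x 1 = x 1 := by
  simp [M2, Matrix.mulVec, dotProduct, Fin.sum_univ_two]

lemma m2_inj : Function.Injective (M2.mulVec : (Fin 2 → ℝ) → (Fin 2 → ℝ)) := by
  intro x y h
  have h0 := congrFun h 0
  have h1 := congrFun h 1
  rw [m2_0, m2_0] at h0
  rw [m2_1, m2_1] at h1
  funext i
  fin_cases i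
  · show x 0 = y 0; linarith
  · exact h1

lemma horiz_between {q z w : Fin 2 → ℝ} (h1 : z 1 = q 1) (h2 : w 1 = q 1)
    (hzq : z 0 < q 0) (hqw : q 0 < w 0) : q ∈ openSegment ℝ z w := by
  have hd : (0:ℝ) < w 0 - z 0 := by linarith
  set t : ℝ := (q 0 - z 0) / (w 0 - z 0) with ht
  have ht0 : 0 < t := div_pos (by linarith) hd
  have ht1 : t < 1 := (div_lt_one hd).2 (by linarith)
  have hmul : t * (w 0 - z 0) = q 0 - z 0 := div_mul_cancel₀ _ hd.ne'
  refine ⟨1 - t, t, by linarith, ht0, by ring, ?_⟩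
  funext i
  fin_cases i
  · simp only [Pi.add_apply, Pi.smul_apply, smul_eq_mul, Fin.isValue]
    show (1 - t) * z 0 + t * w 0 = q 0
    linear_combination hmul
  · simp only [Pi.add_apply, Pi.smul_apply, smul_eq_mul, Fin.isValue]
    show (1 - t) * z 1 + t * w 1 = q 1
    rw [h1, h2]; ring

/-- For a polytope `P` contained in the closed upper (or lower) half-plane, the convex hull of
`P ∪ A₂·P` has at most two more extreme points than `P`. -/
theorem stmt14 (P : Set (Fin 2 → ℝ))
    (hpoly : ∃ F : Set (Fin 2 → ℝ), F.Finite ∧ F.Nonempty ∧ P = convexHull ℝ F)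
    (hsign : (∀ x ∈ P, 0 ≤ x 1) ∨ (∀ x ∈ P, x 1 ≤ 0)) :
    (Set.extremePoints ℝ (convexHull ℝ (P ∪ M2.mulVec '' P))).ncard ≤
      (Set.extremePoints ℝ P).ncard + 2 := by
  clear hsign
  obtain ⟨F, hF, -, hPF⟩ := hpoly
  set Q : Set (Fin 2 → ℝ) := convexHull ℝ (P ∪ M2.mulVec '' P) with hQdef
  set V : Set (Fin 2 → ℝ) := Set.extremePoints ℝ P with hVdef
  set E : Set (Fin 2 → ℝ) := Set.extremePoints ℝ Q with hEdef
  have hPQ : P ⊆ Q := subset_union_left.trans (subset_convexHull ℝ _)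
  have hAQ : M2.mulVec '' P ⊆ Q := subset_union_right.trans (subset_convexHull ℝ _)
  have hconvP : Convex ℝ P := hPF ▸ convex_convexHull ℝ F
  have hVF : V ⊆ F := by rw [hVdef, hPF]; exact extremePoints_convexHull_subset
  have hVfin : V.Finite := hF.subset hVF
  -- extreme points of Q lying in P are extreme points of P
  have hmono : ∀ w ∈ E, w ∈ P → w ∈ V := by
    intro w hw hwP
    refine ⟨hwP, ?_⟩
    intro x₁ h₁ x₂ h₂ hseg
    exact hw.2 (hPQ h₁) (hPQ h₂) hseg
  -- if `A₂ v` is extreme in Q and v ∈ P then v is extreme in P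
  have hpull : ∀ v ∈ P, M2.mulVec v ∈ E → v ∈ V := by
    intro v hv hw
    refine ⟨hv, ?_⟩
    intro x₁ h₁ x₂ h₂ hseg
    obtain ⟨a, b, ha, hb, hab, hsum⟩ := hseg
    have himg : M2.mulVec v ∈ openSegment ℝ (M2.mulVec x₁) (M2.mulVec x₂) := by
      refine ⟨a, b, ha, hb, hab, ?_⟩
      rw [← hsum]
      simp [Matrix.mulVec_add, Matrix.mulVec_smul]
    have := hw.2 (hAQ ⟨x₁, h₁, rfl⟩) (hAQ ⟨x₂, h₂, rfl⟩) himg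
    exact m2_inj this
  have hEPA : E ⊆ P ∪ M2.mulVec '' P := extremePoints_convexHull_subset
  set L : Set (Fin 2 → ℝ) := V ∩ E with hLdef
  set R₀ : Set (Fin 2 → ℝ) :=
    {v | v ∈ V ∧ M2.mulVec v ∈ E ∧ M2.mulVec v ∉ P} with hRdef
  have hcover : E ⊆ L ∪ M2.mulVec '' R₀ := by
    intro w hw
    rcases hEPA hw with hwP | ⟨v, hv, rfl⟩
    · exact Or.inl ⟨hmono w hw hwP, hw⟩
    · by_cases hmem : M2.mulVec v ∈ P
      · exact Or.inl ⟨hmono _ hw hmem, hw⟩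
      · exact Or.inr ⟨v, ⟨hpull v hv hw, hw, hmem⟩, rfl⟩
  have hLV : L ⊆ V := inter_subset_left
  have hRV : R₀ ⊆ V := fun v hv => hv.1
  have hLfin : L.Finite := hVfin.subset hLV
  have hRfin : R₀.Finite := hVfin.subset hRV
  -- the key geometric fact: an element of L ∩ R₀ is the unique point of P at its height
  have key2 : ∀ v ∈ L ∩ R₀, ∀ p ∈ P, p 1 = v 1 → p = v := by
    intro v hv p hp hp1
    obtain ⟨⟨hvV, hvE⟩, -, hAvE, hAvP⟩ := hv
    have hvP : v ∈ P := hvV.1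
    have hAvne : M2.mulVec v ≠ v := fun h => hAvP (by rw [h]; exact hvP)
    have hy0 : v 1 ≠ 0 := by
      intro h
      apply hAvne
      funext i
      fin_cases i
      · show M2.mulVec v 0 = v 0
        rw [m2_0, h, add_zero]
      · exact m2_1 v
    have hvQ : v ∈ Q := hPQ hvP
    have hAvQ : M2.mulVec v ∈ Q := hAQ ⟨v, hvP, rfl⟩
    rcases hy0.lt_or_gt with hneg | hpos
    · -- v 1 < 0 : A₂ v is strictly to the left of v
      have claimA : ∀ z ∈ Q, z 1 = v 1 → z 0 ≤ v 0 := by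
        intro z hz hz1
        by_contra hlt
        push_neg at hlt
        have hseg : v ∈ openSegment ℝ (M2.mulVec v) z :=
          horiz_between (m2_1 v) hz1 (by rw [m2_0]; linarith) hlt
        exact hAvne (hvE.2 hAvQ hz hseg)
      have claimB : ∀ z ∈ Q, z 1 = v 1 → v 0 + v 1 ≤ z 0 := by
        intro z hz hz1
        by_contra hlt
        push_neg at hlt
        have hseg : M2.mulVec v ∈ openSegment ℝ z v :=
          horiz_between (q := M2.mulVec v) (by rw [m2_1]; exact hz1)
            (m2_1 v).symm (by rw [m2_0]; linarith) (by rw [m2_0]; linarith)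
        exact hAvne (hAvE.2 hvQ hz (by rwa [openSegment_symm])).symm
      have h1 : p 0 ≤ v 0 := claimA p (hPQ hp) hp1
      have h2 : v 0 + v 1 ≤ p 0 + p 1 := by
        have := claimB (M2.mulVec p) (hAQ ⟨p, hp, rfl⟩) (by rw [m2_1]; exact hp1)
        rwa [m2_0] at this
      funext i
      fin_cases i
      · show p 0 = v 0; linarith
      · exact hp1
    · -- 0 < v 1 : A₂ v is strictly to the right of v
      have claimA : ∀ z ∈ Q, z 1 = v 1 → v 0 ≤ z 0 := by
        intro z hz hz1
        by_contra hlt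
        push_neg at hlt
        have hseg : v ∈ openSegment ℝ z (M2.mulVec v) :=
          horiz_between hz1 (m2_1 v) hlt (by rw [m2_0]; linarith)
        exact hAvne (hvE.2 hAvQ hz (by rwa [openSegment_symm]))
      have claimB : ∀ z ∈ Q, z 1 = v 1 → z 0 ≤ v 0 + v 1 := by
        intro z hz hz1
        by_contra hlt
        push_neg at hlt
        have hseg : M2.mulVec v ∈ openSegment ℝ v z :=
          horiz_between (q := M2.mulVec v) (m2_1 v).symm
            (by rw [m2_1]; exact hz1) (by rw [m2_0]; linarith) (by rw [m2_0]; linarith)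
        exact hAvne (hAvE.2 hvQ hz hseg).symm
      have h1 : v 0 ≤ p 0 := claimA p (hPQ hp) hp1
      have h2 : p 0 + p 1 ≤ v 0 + v 1 := by
        have := claimB (M2.mulVec p) (hAQ ⟨p, hp, rfl⟩) (by rw [m2_1]; exact hp1)
        rwa [m2_0] at this
      funext i
      fin_cases i
      · show p 0 = v 0; linarith
      · exact hp1
  -- no three elements of L ∩ R₀ at increasing heights
  have three : ∀ u v w : Fin 2 → ℝ, u ∈ L ∩ R₀ → v ∈ L ∩ R₀ → w ∈ L ∩ R₀ →
      u 1 < v 1 → v 1 < w 1 → False := by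
    intro u v w hu hv hw h1 h2
    have huP : u ∈ P := hu.1.1.1
    have hwP : w ∈ P := hw.1.1.1
    have hd : (0:ℝ) < w 1 - u 1 := by linarith
    set t : ℝ := (v 1 - u 1) / (w 1 - u 1) with htdef
    have ht0 : 0 < t := div_pos (by linarith) hd
    have ht1 : t < 1 := (div_lt_one hd).2 (by linarith)
    have hmul : t * (w 1 - u 1) = v 1 - u 1 := div_mul_cancel₀ _ hd.ne'
    have hm : (1 - t) • u + t • w ∈ P :=
      hconvP huP hwP (by linarith) ht0.le (by ring)
    have hm1 : ((1 - t) • u + t • w) 1 = v 1 := by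
      simp only [Pi.add_apply, Pi.smul_apply, smul_eq_mul]
      linear_combination hmul
    have heq : (1 - t) • u + t • w = v := key2 v hv _ hm hm1
    have hseg : v ∈ openSegment ℝ u w := ⟨1 - t, t, by linarith, ht0, by ring, heq⟩
    have := (hv.1.2).2 (hPQ huP) (hPQ hwP) hseg
    have : u 1 = v 1 := by rw [this]
    linarith
  -- hence at most two elements in L ∩ R₀
  have h2card : (L ∩ R₀).ncard ≤ 2 := by
    by_contra hgt
    push_neg at hgt
    obtain ⟨a, ha, b, hb, c, hc, hab, hac, hbc⟩ :=
      (Set.two_lt_ncard ((hLfin.subset inter_subset_left))).1 hgt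
    have key3 : ∀ u v : Fin 2 → ℝ, u ∈ L ∩ R₀ → v ∈ L ∩ R₀ → u ≠ v → u 1 = v 1 → False :=
      fun u v hu hv hne h => hne (key2 v hv u hu.1.1.1 h)
    rcases lt_trichotomy (a 1) (b 1) with h1 | h1 | h1
    · rcases lt_trichotomy (b 1) (c 1) with h2 | h2 | h2
      · exact three a b c ha hb hc h1 h2
      · exact key3 b c hb hc hbc h2
      · rcases lt_trichotomy (a 1) (c 1) with h3 | h3 | h3
        · exact three a c b ha hc hb h3 h2
        · exact key3 a c ha hc hac h3
        · exact three c a b hc ha hb h3 h1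
    · exact key3 a b ha hb hab h1
    · rcases lt_trichotomy (a 1) (c 1) with h2 | h2 | h2
      · exact three b a c hb ha hc h1 h2
      · exact key3 a c ha hc hac h2
      · rcases lt_trichotomy (b 1) (c 1) with h3 | h3 | h3
        · exact three b c a hb hc ha h3 h2
        · exact key3 b c hb hc hbc h3
        · exact three c b a hc hb ha h3 h1
  -- count
  calc E.ncard ≤ (L ∪ M2.mulVec '' R₀).ncard :=
        Set.ncard_le_ncard hcover (hLfin.union (hRfin.image _))
    _ ≤ L.ncard + (M2.mulVec '' R₀).ncard := Set.ncard_union_le _ _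
    _ = L.ncard + R₀.ncard := by rw [Set.ncard_image_of_injective _ m2_inj]
    _ = (L ∪ R₀).ncard + (L ∩ R₀).ncard :=
        (Set.ncard_union_add_ncard_inter L R₀ hLfin hRfin).symm
    _ ≤ V.ncard + 2 :=
        add_le_add (Set.ncard_le_ncard (union_subset hLV hRV) hVfin) h2card

end
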